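/- For every p ≥ 3 and k ≥ 1, the largest eigenvalue of the lollipop L(p,k) is strictly greater than 2 and its second largest eigenvalue is strictly less than 2. -/

import Mathlib

open Polynomial

/-- The characteristic polynomial (over `ℝ`) of the adjacency matrix of a finite graph. -/
noncomputable def graphCharpoly {V : Type*} [Fintype V] [DecidableEq V]
    (G : SimpleGraph V) : Polynomial ℝ :=
  letI := Classical.decRel G.Adj
  (G.adjMatrix ℝ).charpoly

/-- `Q_{P_n}`: the characteristic polynomial of the path on `n` vertices. -/
noncomputable def Qpath (n : ℕ) : Polynomial ℝ := graphCharpoly (SimpleGraph.pathGraph n)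

/-- `Q_{C_n}`: the characteristic polynomial of the cycle on `n` vertices. -/
noncomputable def Qcycle (n : ℕ) : Polynomial ℝ := graphCharpoly (SimpleGraph.cycleGraph n)

/-- The lollipop `L(p,k)`: a cycle on `p` vertices with a path of `k` further
vertices attached to one cycle vertex. -/
def lollipop (p k : ℕ) : SimpleGraph (Fin p ⊕ Fin k) :=
  SimpleGraph.fromRel (fun a b =>
    match a, b with
    | Sum.inl i, Sum.inl j => ((i : ℕ) + 1) % p = (j : ℕ)
    | Sum.inl i, Sum.inr j => (i : ℕ) = 0 ∧ (j : ℕ) = 0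
    | Sum.inr i, Sum.inr j => (i : ℕ) + 1 = (j : ℕ)
    | _, _ => False)

/-- The adjacency matrix (over `ℝ`) of a finite graph. -/
noncomputable def adjMat {V : Type*} [Fintype V] [DecidableEq V]
    (G : SimpleGraph V) : Matrix V V ℝ :=
  letI := Classical.decRel G.Adj
  G.adjMatrix ℝ

section LollipopAux
open Matrix

open Matrix in
lemma dot_eq_inner {n : Type*} [Fintype n] (x y : n → ℝ) :
    (@inner ℝ (EuclideanSpace ℝ n) _ (WithLp.toLp 2 x) (WithLp.toLp 2 y) : ℝ) = x ⬝ᵥ y := by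
  simp [PiLp.inner_apply, dotProduct, mul_comm]

open Matrix in
lemma quad_expand {n : Type*} [Fintype n] [DecidableEq n]
    (A : Matrix n n ℝ) (hA : A.IsHermitian) (x : n → ℝ) :
    x ⬝ᵥ (A *ᵥ x) = ∑ j, hA.eigenvalues j * ((hA.eigenvectorBasis.repr (WithLp.toLp 2 x)) j)^2 ∧
      x ⬝ᵥ x = ∑ j, ((hA.eigenvectorBasis.repr (WithLp.toLp 2 x)) j)^2 := by
  set B := hA.eigenvectorBasis with hB
  have hrep : ∀ (y : n → ℝ) (j : n), B.repr (WithLp.toLp 2 y) j = (B j : n → ℝ) ⬝ᵥ y := by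
    intro y j
    exact (B.repr_apply_apply _ _).trans (dot_eq_inner _ _)
  have hAsymm : ∀ (u v : n → ℝ), u ⬝ᵥ (A *ᵥ v) = (A *ᵥ u) ⬝ᵥ v := by
    intro u v
    rw [Matrix.dotProduct_mulVec, ← Matrix.mulVec_transpose, show Aᵀ = A from hA]
  have hAx : ∀ j, B.repr (WithLp.toLp 2 (A *ᵥ x)) j = hA.eigenvalues j * B.repr (WithLp.toLp 2 x) j := by
    intro j
    have h2 : A *ᵥ (B j : n → ℝ) = hA.eigenvalues j • (B j : n → ℝ) :=
      hA.mulVec_eigenvectorBasis j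
    rw [hrep, hrep, hAsymm, h2, smul_dotProduct]
    rfl
  have key : ∀ y : n → ℝ, x ⬝ᵥ y = ∑ j, B.repr (WithLp.toLp 2 x) j * B.repr (WithLp.toLp 2 y) j := by
    intro y
    rw [← dot_eq_inner, ← B.repr.inner_map_map (WithLp.toLp 2 x) (WithLp.toLp 2 y)]
    rw [show (@inner ℝ (EuclideanSpace ℝ n) _ (B.repr (WithLp.toLp 2 x)) (B.repr (WithLp.toLp 2 y)) : ℝ)
      = (B.repr (WithLp.toLp 2 x) : n → ℝ) ⬝ᵥ (B.repr (WithLp.toLp 2 y) : n → ℝ) from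
        dot_eq_inner (B.repr (WithLp.toLp 2 x) : n → ℝ) (B.repr (WithLp.toLp 2 y) : n → ℝ)]
    rfl
  constructor
  · rw [key (A *ᵥ x)]
    refine Finset.sum_congr rfl fun j _ => ?_
    rw [hAx j]; ring
  · rw [key x]
    refine Finset.sum_congr rfl fun j _ => ?_
    ring

open Matrix in
lemma glue_main {n : Type*} [Fintype n] [DecidableEq n] [Nonempty n]
    (A : Matrix n n ℝ) (hA : A.IsHermitian) (z : n)
    (v : n → ℝ) (hv : 2 * (v ⬝ᵥ v) < v ⬝ᵥ (A *ᵥ v))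
    (hyp : ∀ x : n → ℝ, x ≠ 0 → x z = 0 → x ⬝ᵥ (A *ᵥ x) < 2 * (x ⬝ᵥ x)) :
    ∃ i, 2 < hA.eigenvalues i ∧ ∀ j, j ≠ i → hA.eigenvalues j < 2 := by
  set B := hA.eigenvectorBasis with hB
  obtain ⟨i, hi⟩ := Finite.exists_max hA.eigenvalues
  refine ⟨i, ?_, ?_⟩
  · -- Rayleigh: max eigenvalue > 2
    by_contra hle
    push_neg at hle
    obtain ⟨h1, h2⟩ := quad_expand A hA v
    have : v ⬝ᵥ (A *ᵥ v) ≤ 2 * (v ⬝ᵥ v) := by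
      rw [h1, h2, Finset.mul_sum]
      refine Finset.sum_le_sum fun j _ => ?_
      have : hA.eigenvalues j ≤ 2 := le_trans (hi j) hle
      nlinarith [sq_nonneg ((B.repr (WithLp.toLp 2 v)) j)]
    linarith
  · intro j hj
    by_contra hge
    push_neg at hge
    -- u, w : eigenvectors for i and j
    set u : n → ℝ := (B i : n → ℝ) with hu
    set w : n → ℝ := (B j : n → ℝ) with hw
    have hAu : A *ᵥ u = hA.eigenvalues i • u := hA.mulVec_eigenvectorBasis i
    have hAw : A *ᵥ w = hA.eigenvalues j • w := hA.mulVec_eigenvectorBasis j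
    have huu : u ⬝ᵥ u = 1 := by
      rw [← dot_eq_inner]
      have h : @inner ℝ (EuclideanSpace ℝ n) _ (B i) (B i) = (1:ℝ) := by
        rw [real_inner_self_eq_norm_sq, B.orthonormal.1 i]; norm_num
      exact h
    have hww : w ⬝ᵥ w = 1 := by
      rw [← dot_eq_inner]
      have h : @inner ℝ (EuclideanSpace ℝ n) _ (B j) (B j) = (1:ℝ) := by
        rw [real_inner_self_eq_norm_sq, B.orthonormal.1 j]; norm_num
      exact h
    have huw : u ⬝ᵥ w = 0 := by
      rw [← dot_eq_inner]
      exact B.orthonormal.2 (Ne.symm hj)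
    have hwu : w ⬝ᵥ u = 0 := by rw [dotProduct_comm]; exact huw
    have hij : hA.eigenvalues j ≤ hA.eigenvalues i := hi j
    -- the combination vanishing at z
    set a : ℝ := w z with ha
    set b : ℝ := -(u z) with hb2
    -- general computation
    have quad : ∀ (a b : ℝ), (a • u + b • w) ⬝ᵥ (A *ᵥ (a • u + b • w))
        = hA.eigenvalues i * a^2 + hA.eigenvalues j * b^2 := by
      intro a b
      rw [Matrix.mulVec_add, Matrix.mulVec_smul, Matrix.mulVec_smul, hAu, hAw]
      simp only [add_dotProduct, dotProduct_add, smul_dotProduct,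
        dotProduct_smul, smul_eq_mul, huu, hww, huw, hwu]
      ring
    have norm2 : ∀ (a b : ℝ), (a • u + b • w) ⬝ᵥ (a • u + b • w) = a^2 + b^2 := by
      intro a b
      simp only [add_dotProduct, dotProduct_add, smul_dotProduct,
        dotProduct_smul, smul_eq_mul, huu, hww, huw, hwu]
      ring
    have hcontr : ∀ (a b : ℝ), (a ≠ 0 ∨ b ≠ 0) → (a * u z + b * w z = 0) → False := by
      intro a b hab hz
      set x : n → ℝ := a • u + b • w with hx
      have hxz : x z = 0 := by
        simp only [hx, Pi.add_apply, Pi.smul_apply, smul_eq_mul]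
        linarith
      have hxne : x ≠ 0 := by
        intro h0
        have h1 : x ⬝ᵥ x = 0 := by rw [h0]; simp
        rw [norm2] at h1
        rcases hab with h | h
        · exact h (by nlinarith [sq_nonneg a, sq_nonneg b])
        · exact h (by nlinarith [sq_nonneg a, sq_nonneg b])
      have h2 := hyp x hxne hxz
      rw [hx, quad, norm2] at h2
      nlinarith [sq_nonneg a, sq_nonneg b, hge, hij, sq_nonneg (a+b)]
    by_cases hz0 : u z = 0 ∧ w z = 0
    · exact hcontr 0 1 (Or.inr one_ne_zero) (by rw [hz0.1, hz0.2]; ring)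
    · refine hcontr (w z) (-(u z)) ?_ (by ring)
      rcases not_and_or.mp hz0 with h | h
      · exact Or.inr (by simpa using h)
      · exact Or.inl h

lemma path_form_identity (f : ℕ → ℝ) (m : ℕ) :
    2 * ((∑ i ∈ Finset.range (m+1), (f i)^2) - ∑ i ∈ Finset.range m, f i * f (i+1))
      = (f 0)^2 + (f m)^2 + ∑ i ∈ Finset.range m, (f i - f (i+1))^2 := by
  induction m with
  | zero => simp; ring
  | succ m ih =>
    rw [Finset.sum_range_succ (f := fun i => (f i)^2), Finset.sum_range_succ (f := fun i => f i * f (i+1)),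
      Finset.sum_range_succ (f := fun i => (f i - f (i+1))^2)]
    nlinarith [ih]

lemma path_form_pos (f : ℕ → ℝ) (m : ℕ) (hne : ∃ j ≤ m, f j ≠ 0) :
    0 < (∑ i ∈ Finset.range (m+1), (f i)^2) - ∑ i ∈ Finset.range m, f i * f (i+1) := by
  have hid := path_form_identity f m
  have hnn : (0:ℝ) ≤ ∑ i ∈ Finset.range m, (f i - f (i+1))^2 :=
    Finset.sum_nonneg fun i _ => sq_nonneg _
  rcases lt_or_eq_of_le hnn with h | h
  · nlinarith [sq_nonneg (f 0), sq_nonneg (f m)]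
  · -- all differences zero
    have hdiff : ∀ i ∈ Finset.range m, (f i - f (i+1))^2 = 0 := by
      intro i hi
      have := (Finset.sum_eq_zero_iff_of_nonneg (fun i _ => sq_nonneg (f i - f (i+1)))).mp h.symm
      exact this i hi
    by_cases h0 : f 0 = 0
    · -- then all f i = 0 for i ≤ m, contradiction with hne
      exfalso
      obtain ⟨j, hj, hfj⟩ := hne
      have hall : ∀ i, i ≤ m → f i = 0 := by
        intro i
        induction i with
        | zero => intro _; exact h0
        | succ i ih2 =>
          intro hi
          have h1 := hdiff i (Finset.mem_range.mpr (by omega))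
          have h2 : f i = 0 := ih2 (by omega)
          have := sq_eq_zero_iff.mp h1
          linarith
      exact hfj (hall j hj)
    · nlinarith [sq_nonneg (f m), sq_nonneg (f 0), pow_pos (abs_pos.mpr h0) 2, sq_abs (f 0)]

lemma adj_ll {p k : ℕ} (hp : 3 ≤ p) (i j : Fin p) :
    (lollipop p k).Adj (Sum.inl i) (Sum.inl j) ↔
      (((i:ℕ)+1) % p = (j:ℕ) ∨ ((j:ℕ)+1) % p = (i:ℕ)) := by
  rw [lollipop, SimpleGraph.fromRel_adj]
  simp only [ne_eq, Sum.inl.injEq]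
  constructor
  · rintro ⟨hne, h⟩; exact h
  · intro h
    refine ⟨fun heq => ?_, h⟩
    subst heq
    have h1 := i.isLt
    have h2 := Nat.mod_eq_of_lt (show (i:ℕ)+1-p < p by omega)
    rcases h with h | h <;>
    · rcases Nat.lt_or_ge ((i:ℕ)+1) p with hlt | hge
      · rw [Nat.mod_eq_of_lt hlt] at h; omega
      · rw [Nat.mod_eq_sub_mod hge, h2] at h; omega

lemma adj_lr {p k : ℕ} (i : Fin p) (j : Fin k) :
    (lollipop p k).Adj (Sum.inl i) (Sum.inr j) ↔ ((i:ℕ) = 0 ∧ (j:ℕ) = 0) := by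
  rw [lollipop, SimpleGraph.fromRel_adj]
  simp

lemma adj_rl {p k : ℕ} (i : Fin p) (j : Fin k) :
    (lollipop p k).Adj (Sum.inr j) (Sum.inl i) ↔ ((i:ℕ) = 0 ∧ (j:ℕ) = 0) := by
  rw [SimpleGraph.adj_comm]; exact adj_lr i j

lemma adj_rr {p k : ℕ} (i j : Fin k) :
    (lollipop p k).Adj (Sum.inr i) (Sum.inr j) ↔
      ((i:ℕ)+1 = (j:ℕ) ∨ ((j:ℕ)+1 = (i:ℕ))) := by
  rw [lollipop, SimpleGraph.fromRel_adj]
  simp only [ne_eq, Sum.inr.injEq]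
  constructor
  · rintro ⟨hne, h⟩; exact h
  · intro h
    refine ⟨fun heq => ?_, h⟩
    subst heq
    omega

-- generic: dot product against adj matrix as a double indicator sum
open Classical in
lemma dot_adjMat {V : Type*} [Fintype V] [DecidableEq V] (G : SimpleGraph V) (x : V → ℝ) :
    x ⬝ᵥ (adjMat G *ᵥ x) = ∑ u, ∑ v, (if G.Adj u v then x u * x v else 0) := by
  classical
  unfold adjMat
  simp only [dotProduct, Matrix.mulVec, dotProduct]
  refine Finset.sum_congr rfl fun u _ => ?_
  rw [Finset.mul_sum]
  refine Finset.sum_congr rfl fun v _ => ?_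
  rw [SimpleGraph.adjMatrix_apply]
  split_ifs <;> ring

lemma dot_self_split {p k : ℕ} (x : Fin p ⊕ Fin k → ℝ) (y z : ℕ → ℝ)
    (hy : ∀ (t : ℕ) (h : t < p), y t = x (Sum.inl ⟨t, h⟩))
    (hz : ∀ (t : ℕ) (h : t < k), z t = x (Sum.inr ⟨t, h⟩)) :
    x ⬝ᵥ x = (∑ t ∈ Finset.range p, (y t)^2) + ∑ t ∈ Finset.range k, (z t)^2 := by
  rw [dotProduct, Fintype.sum_sum_type]
  congr 1
  · rw [← Fin.sum_univ_eq_sum_range (fun t => (y t)^2) p]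
    refine Finset.sum_congr rfl fun i _ => ?_
    rw [hy i.val i.isLt, Fin.eta]; ring
  · rw [← Fin.sum_univ_eq_sum_range (fun t => (z t)^2) k]
    refine Finset.sum_congr rfl fun i _ => ?_
    rw [hz i.val i.isLt, Fin.eta]; ring

lemma sum_ite_single' {α : Type*} [Fintype α] [DecidableEq α] (b : α) (f : α → ℝ)
    (c : α → Prop) [DecidablePred c] (hb : ∀ j, c j ↔ j = b) :
    (∑ j, if c j then f j else 0) = f b := by
  have : (∑ j, if c j then f j else 0) = (∑ j, if j = b then f j else 0) := by
    refine Finset.sum_congr rfl fun j _ => ?_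
    by_cases h : j = b
    · rw [if_pos h, if_pos ((hb j).mpr h)]
    · rw [if_neg h, if_neg (fun hc => h ((hb j).mp hc))]
  rw [this]
  simp

lemma sum_ite_zero' {α : Type*} [Fintype α] (f : α → ℝ) (c : α → Prop) [DecidablePred c]
    (hb : ∀ j, ¬ c j) : (∑ j : α, if c j then f j else 0) = 0 :=
  Finset.sum_eq_zero fun j _ => if_neg (hb j)

lemma no_two_cycle {p : ℕ} (hp : 3 ≤ p) {a b : ℕ} (ha : a < p) (hb : b < p)
    (h1 : (a+1) % p = b) (h2 : (b+1) % p = a) : False := by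
  rcases Nat.lt_or_ge (a+1) p with h | h
  · rw [Nat.mod_eq_of_lt h] at h1
    rcases Nat.lt_or_ge (b+1) p with h' | h'
    · rw [Nat.mod_eq_of_lt h'] at h2; omega
    · have hbp : b+1 = p := by omega
      rw [hbp, Nat.mod_self] at h2; omega
  · have hap : a+1 = p := by omega
    rw [hap, Nat.mod_self] at h1
    subst h1
    rw [Nat.mod_eq_of_lt (by omega)] at h2
    omega

lemma lollipop_quad {p k : ℕ} (hp : 3 ≤ p) (hk : 1 ≤ k) (x : Fin p ⊕ Fin k → ℝ)
    (y z : ℕ → ℝ)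
    (hy : ∀ (t : ℕ) (h : t < p), y t = x (Sum.inl ⟨t, h⟩))
    (hz : ∀ (t : ℕ) (h : t < k), z t = x (Sum.inr ⟨t, h⟩)) :
    x ⬝ᵥ (adjMat (lollipop p k) *ᵥ x) =
      2 * (∑ t ∈ Finset.range p, y t * y ((t+1) % p))
      + 2 * (y 0 * z 0)
      + 2 * (∑ t ∈ Finset.range (k-1), z t * z (t+1)) := by
  classical
  have hp0 : 0 < p := by omega
  have hk0 : 0 < k := by omega
  rw [dot_adjMat]
  rw [Fintype.sum_sum_type]
  have hinner : ∀ u : Fin p ⊕ Fin k,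
      (∑ v, (if (lollipop p k).Adj u v then x u * x v else 0)) =
      (∑ i : Fin p, (if (lollipop p k).Adj u (Sum.inl i) then x u * x (Sum.inl i) else 0))
      + (∑ j : Fin k, (if (lollipop p k).Adj u (Sum.inr j) then x u * x (Sum.inr j) else 0)) :=
    fun u => Fintype.sum_sum_type _
  simp only [hinner, Finset.sum_add_distrib]
  -- abbreviations
  set σ : Fin p → Fin p := fun i => ⟨((i:ℕ)+1) % p, Nat.mod_lt _ hp0⟩ with hσ
  -- Block LL
  have bLL : (∑ i : Fin p, ∑ j : Fin p,
      (if (lollipop p k).Adj (Sum.inl i) (Sum.inl j) then x (Sum.inl i) * x (Sum.inl j) else 0))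
      = 2 * (∑ t ∈ Finset.range p, y t * y ((t+1) % p)) := by
    have step : ∀ i j : Fin p,
        (if (lollipop p k).Adj (Sum.inl i) (Sum.inl j) then x (Sum.inl i) * x (Sum.inl j) else 0)
        = (if ((i:ℕ)+1) % p = (j:ℕ) then x (Sum.inl i) * x (Sum.inl j) else 0)
          + (if ((j:ℕ)+1) % p = (i:ℕ) then x (Sum.inl i) * x (Sum.inl j) else 0) := by
      intro i j
      by_cases h1 : ((i:ℕ)+1) % p = (j:ℕ) <;> by_cases h2 : ((j:ℕ)+1) % p = (i:ℕ)
      · exact absurd h1 (fun h1 => no_two_cycle hp i.isLt j.isLt h1 h2)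
      all_goals simp [adj_ll hp, h1, h2]
    simp only [step, Finset.sum_add_distrib]
    have e1 : (∑ i : Fin p, ∑ j : Fin p,
        (if ((i:ℕ)+1) % p = (j:ℕ) then x (Sum.inl i) * x (Sum.inl j) else 0))
        = ∑ i : Fin p, x (Sum.inl i) * x (Sum.inl (σ i)) := by
      refine Finset.sum_congr rfl fun i _ => ?_
      exact sum_ite_single' (σ i) (fun j => x (Sum.inl i) * x (Sum.inl j)) _
        (fun j => by rw [Fin.ext_iff]; exact eq_comm)
    have e2 : (∑ i : Fin p, ∑ j : Fin p,
        (if ((j:ℕ)+1) % p = (i:ℕ) then x (Sum.inl i) * x (Sum.inl j) else 0))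
        = ∑ j : Fin p, x (Sum.inl (σ j)) * x (Sum.inl j) := by
      rw [Finset.sum_comm]
      refine Finset.sum_congr rfl fun j _ => ?_
      exact sum_ite_single' (σ j) (fun i => x (Sum.inl i) * x (Sum.inl j)) _
        (fun i => by rw [Fin.ext_iff]; exact eq_comm)
    rw [e1, e2, ← Fin.sum_univ_eq_sum_range (fun t => y t * y ((t+1) % p)) p]
    have e3 : ∀ i : Fin p, x (Sum.inl i) * x (Sum.inl (σ i))
        = y (i:ℕ) * y (((i:ℕ)+1) % p) := by
      intro i
      rw [hy (i:ℕ) i.isLt, hy (((i:ℕ)+1) % p) (Nat.mod_lt _ hp0), Fin.eta]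
    have e4 : ∀ i : Fin p, x (Sum.inl (σ i)) * x (Sum.inl i)
        = y (i:ℕ) * y (((i:ℕ)+1) % p) := fun i => by rw [mul_comm]; exact e3 i
    simp only [e3, e4]
    ring
  -- Block LR
  have bLR : (∑ i : Fin p, ∑ j : Fin k,
      (if (lollipop p k).Adj (Sum.inl i) (Sum.inr j) then x (Sum.inl i) * x (Sum.inr j) else 0))
      = y 0 * z 0 := by
    simp only [adj_lr]
    have inner : ∀ i : Fin p, (∑ j : Fin k,
        (if ((i:ℕ) = 0 ∧ (j:ℕ) = 0) then x (Sum.inl i) * x (Sum.inr j) else 0))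
        = (if (i:ℕ) = 0 then x (Sum.inl i) * x (Sum.inr ⟨0, hk0⟩) else 0) := by
      intro i
      by_cases hi : (i:ℕ) = 0
      · rw [if_pos hi]
        exact sum_ite_single' (⟨0, hk0⟩ : Fin k) (fun j => x (Sum.inl i) * x (Sum.inr j)) _
          (fun j => by rw [Fin.ext_iff]; simp [hi])
      · rw [if_neg hi]
        exact sum_ite_zero' _ _ (fun j hc => hi hc.1)
    simp only [inner]
    rw [sum_ite_single' (⟨0, hp0⟩ : Fin p) (fun i => x (Sum.inl i) * x (Sum.inr ⟨0, hk0⟩)) _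
      (fun i => by rw [Fin.ext_iff])]
    rw [hy 0 hp0, hz 0 hk0]
  -- Block RL
  have bRL : (∑ j : Fin k, ∑ i : Fin p,
      (if (lollipop p k).Adj (Sum.inr j) (Sum.inl i) then x (Sum.inr j) * x (Sum.inl i) else 0))
      = y 0 * z 0 := by
    simp only [adj_rl]
    have inner : ∀ j : Fin k, (∑ i : Fin p,
        (if ((i:ℕ) = 0 ∧ (j:ℕ) = 0) then x (Sum.inr j) * x (Sum.inl i) else 0))
        = (if (j:ℕ) = 0 then x (Sum.inr j) * x (Sum.inl ⟨0, hp0⟩) else 0) := by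
      intro j
      by_cases hj : (j:ℕ) = 0
      · rw [if_pos hj]
        exact sum_ite_single' (⟨0, hp0⟩ : Fin p) (fun i => x (Sum.inr j) * x (Sum.inl i)) _
          (fun i => by rw [Fin.ext_iff]; simp [hj])
      · rw [if_neg hj]
        exact sum_ite_zero' _ _ (fun i hc => hj hc.2)
    simp only [inner]
    rw [sum_ite_single' (⟨0, hk0⟩ : Fin k) (fun j => x (Sum.inr j) * x (Sum.inl ⟨0, hp0⟩)) _
      (fun j => by rw [Fin.ext_iff])]
    rw [hy 0 hp0, hz 0 hk0]
    ring
  -- Block RR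
  have bRR : (∑ i : Fin k, ∑ j : Fin k,
      (if (lollipop p k).Adj (Sum.inr i) (Sum.inr j) then x (Sum.inr i) * x (Sum.inr j) else 0))
      = 2 * (∑ t ∈ Finset.range (k-1), z t * z (t+1)) := by
    have step : ∀ i j : Fin k,
        (if (lollipop p k).Adj (Sum.inr i) (Sum.inr j) then x (Sum.inr i) * x (Sum.inr j) else 0)
        = (if (i:ℕ)+1 = (j:ℕ) then x (Sum.inr i) * x (Sum.inr j) else 0)
          + (if (j:ℕ)+1 = (i:ℕ) then x (Sum.inr i) * x (Sum.inr j) else 0) := by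
      intro i j
      by_cases h1 : (i:ℕ)+1 = (j:ℕ) <;> by_cases h2 : (j:ℕ)+1 = (i:ℕ)
      · omega
      all_goals simp [adj_rr, h1, h2]
    simp only [step, Finset.sum_add_distrib]
    have e1 : (∑ i : Fin k, ∑ j : Fin k,
        (if (i:ℕ)+1 = (j:ℕ) then x (Sum.inr i) * x (Sum.inr j) else 0))
        = ∑ i : Fin k, (if h : (i:ℕ)+1 < k then x (Sum.inr i) * x (Sum.inr ⟨(i:ℕ)+1, h⟩) else 0) := by
      refine Finset.sum_congr rfl fun i _ => ?_
      by_cases h : (i:ℕ)+1 < k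
      · rw [dif_pos h]
        exact sum_ite_single' (⟨(i:ℕ)+1, h⟩ : Fin k) (fun j => x (Sum.inr i) * x (Sum.inr j)) _
          (fun j => by rw [Fin.ext_iff]; exact eq_comm)
      · rw [dif_neg h]
        exact sum_ite_zero' _ _ (fun j hc => h (by have := j.isLt; omega))
    have e2 : (∑ i : Fin k, ∑ j : Fin k,
        (if (j:ℕ)+1 = (i:ℕ) then x (Sum.inr i) * x (Sum.inr j) else 0))
        = ∑ j : Fin k, (if h : (j:ℕ)+1 < k then x (Sum.inr ⟨(j:ℕ)+1, h⟩) * x (Sum.inr j) else 0) := by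
      rw [Finset.sum_comm]
      refine Finset.sum_congr rfl fun j _ => ?_
      by_cases h : (j:ℕ)+1 < k
      · rw [dif_pos h]
        exact sum_ite_single' (⟨(j:ℕ)+1, h⟩ : Fin k) (fun i => x (Sum.inr i) * x (Sum.inr j)) _
          (fun i => by rw [Fin.ext_iff]; exact eq_comm)
      · rw [dif_neg h]
        exact sum_ite_zero' _ _ (fun i hc => h (by have := i.isLt; omega))
    have conv0 : ∀ t (h : t + 1 < k), x (Sum.inr (⟨t, by omega⟩ : Fin k)) * x (Sum.inr ⟨t+1, h⟩)
        = z t * z (t+1) := by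
      intro t h
      rw [hz t (by omega), hz (t+1) h]
    have conva : (∑ i : Fin k, (if h : (i:ℕ)+1 < k then x (Sum.inr i) * x (Sum.inr ⟨(i:ℕ)+1, h⟩) else 0))
        = ∑ t ∈ Finset.range k, (if h : t+1 < k then z t * z (t+1) else 0) := by
      rw [← Fin.sum_univ_eq_sum_range (fun t => if h : t+1 < k then z t * z (t+1) else 0) k]
      refine Finset.sum_congr rfl fun i _ => ?_
      by_cases h : (i:ℕ)+1 < k
      · rw [dif_pos h, dif_pos h, ← conv0 (i:ℕ) h, Fin.eta]
      · rw [dif_neg h, dif_neg h]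
    have convb : (∑ j : Fin k, (if h : (j:ℕ)+1 < k then x (Sum.inr ⟨(j:ℕ)+1, h⟩) * x (Sum.inr j) else 0))
        = ∑ t ∈ Finset.range k, (if h : t+1 < k then z t * z (t+1) else 0) := by
      rw [← Fin.sum_univ_eq_sum_range (fun t => if h : t+1 < k then z t * z (t+1) else 0) k]
      refine Finset.sum_congr rfl fun i _ => ?_
      by_cases h : (i:ℕ)+1 < k
      · rw [dif_pos h, dif_pos h, ← conv0 (i:ℕ) h, Fin.eta, mul_comm]
      · rw [dif_neg h, dif_neg h]
    have convc : (∑ t ∈ Finset.range k, (if h : t+1 < k then z t * z (t+1) else 0))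
        = ∑ t ∈ Finset.range (k-1), z t * z (t+1) := by
      have hks : k = (k-1)+1 := by omega
      rw [hks, Finset.sum_range_succ, dif_neg (by omega), add_zero]
      refine Finset.sum_congr rfl fun t ht => ?_
      rw [dif_pos (by have := Finset.mem_range.mp ht; omega)]
    rw [e1, e2, conva, convb, convc]
    ring
  rw [bLL, bLR, bRL, bRR]
  ring

lemma path_form_nonneg (f : ℕ → ℝ) (m : ℕ) :
    0 ≤ (∑ i ∈ Finset.range (m+1), (f i)^2) - ∑ i ∈ Finset.range m, f i * f (i+1) := by
  have hid := path_form_identity f m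
  have hnn : (0:ℝ) ≤ ∑ i ∈ Finset.range m, (f i - f (i+1))^2 :=
    Finset.sum_nonneg fun i _ => sq_nonneg _
  nlinarith [sq_nonneg (f 0), sq_nonneg (f m)]

-- Hyperplane negativity
lemma lollipop_hyperplane {p k : ℕ} (hp : 3 ≤ p) (hk : 1 ≤ k) (x : Fin p ⊕ Fin k → ℝ)
    (hx : x ≠ 0) (h0 : x (Sum.inl ⟨0, by omega⟩) = 0) :
    x ⬝ᵥ (adjMat (lollipop p k) *ᵥ x) < 2 * (x ⬝ᵥ x) := by
  set y : ℕ → ℝ := fun t => if h : t < p then x (Sum.inl ⟨t, h⟩) else 0 with hydef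
  set z : ℕ → ℝ := fun t => if h : t < k then x (Sum.inr ⟨t, h⟩) else 0 with hzdef
  have hy : ∀ (t : ℕ) (h : t < p), y t = x (Sum.inl ⟨t, h⟩) := fun t h => dif_pos h
  have hz : ∀ (t : ℕ) (h : t < k), z t = x (Sum.inr ⟨t, h⟩) := fun t h => dif_pos h
  have hy0 : y 0 = 0 := by rw [hy 0 (by omega)]; exact h0
  rw [lollipop_quad hp hk x y z hy hz, dot_self_split x y z hy hz]
  -- rewrite the cycle sum
  set f : ℕ → ℝ := fun t => y (t+1) with hfdef
  have hcyc : (∑ t ∈ Finset.range p, y t * y ((t+1) % p))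
      = ∑ t ∈ Finset.range (p-2), f t * f (t+1) := by
    have h1 : p = (p-1)+1 := by omega
    rw [h1, Finset.sum_range_succ']
    have h2 : p-1 = (p-2)+1 := by omega
    rw [h2, Finset.sum_range_succ]
    have hlast : y ((p-2)+1) * y ((((p-2)+1)+1) % ((p-2)+1+1)) = 0 := by
      rw [Nat.mod_self, hy0, mul_zero]
    have hfirst : y 0 * y ((0+1) % ((p-2)+1+1)) = 0 := by rw [hy0, zero_mul]
    rw [hlast, hfirst, add_zero, add_zero]
    refine Finset.sum_congr rfl fun t ht => ?_
    have htlt := Finset.mem_range.mp ht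
    rw [Nat.mod_eq_of_lt (by omega)]
  have hysq : (∑ t ∈ Finset.range p, (y t)^2) = ∑ t ∈ Finset.range (p-1), (f t)^2 := by
    have h1 : p = (p-1)+1 := by omega
    rw [h1, Finset.sum_range_succ']
    rw [hy0]
    norm_num
    rfl
  have hcycle_part : 0 ≤ (∑ t ∈ Finset.range (p-1), (f t)^2)
      - ∑ t ∈ Finset.range (p-2), f t * f (t+1) := by
    have h2 : p-1 = (p-2)+1 := by omega
    rw [h2]
    exact path_form_nonneg f (p-2)
  have hpath_part : 0 ≤ (∑ t ∈ Finset.range k, (z t)^2)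
      - ∑ t ∈ Finset.range (k-1), z t * z (t+1) := by
    have h2 : k = (k-1)+1 := by omega
    rw [h2]
    exact path_form_nonneg z (k-1)
  -- strictness: some coordinate nonzero
  have hstrict : (0 < (∑ t ∈ Finset.range (p-1), (f t)^2)
      - ∑ t ∈ Finset.range (p-2), f t * f (t+1))
      ∨ (0 < (∑ t ∈ Finset.range k, (z t)^2)
      - ∑ t ∈ Finset.range (k-1), z t * z (t+1)) := by
    obtain ⟨u, hu⟩ := Function.ne_iff.mp hx
    rcases u with i | j
    · left
      have h2 : p-1 = (p-2)+1 := by omega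
      rw [h2]
      have hi0 : (i:ℕ) ≠ 0 := by
        intro hi
        apply hu
        have hieq : i = (⟨0, by omega⟩ : Fin p) := Fin.ext hi
        rw [hieq, h0]
        rfl
      refine path_form_pos f (p-2) ⟨(i:ℕ)-1, by have := i.isLt; omega, ?_⟩
      have heq1 : (i:ℕ)-1+1 = (i:ℕ) := by omega
      rw [hfdef]
      simp only [heq1]
      rw [hy (i:ℕ) i.isLt, Fin.eta]
      simpa using hu
    · right
      have h2 : k = (k-1)+1 := by omega
      rw [h2]
      refine path_form_pos z (k-1) ⟨(j:ℕ), by have := j.isLt; omega, ?_⟩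
      rw [hz (j:ℕ) j.isLt, Fin.eta]
      simpa using hu
  rw [hcyc, hysq, hy0, zero_mul, mul_zero, add_zero]
  rcases hstrict with h | h
  · nlinarith
  · nlinarith

lemma lollipop_testvec {p k : ℕ} (hp : 3 ≤ p) (hk : 1 ≤ k) :
    ∃ v : Fin p ⊕ Fin k → ℝ, 2 * (v ⬝ᵥ v) < v ⬝ᵥ (adjMat (lollipop p k) *ᵥ v) := by
  classical
  set z : ℕ → ℝ := fun t => if t = k-1 then 1/2 else 1 with hzdef
  refine ⟨fun u => match u with
    | Sum.inl _ => 1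
    | Sum.inr j => z (j:ℕ), ?_⟩
  set v : Fin p ⊕ Fin k → ℝ := fun u => match u with
    | Sum.inl _ => 1
    | Sum.inr j => z (j:ℕ) with hvdef
  show 2 * (v ⬝ᵥ v) < v ⬝ᵥ (adjMat (lollipop p k) *ᵥ v)
  have hy : ∀ (t : ℕ) (h : t < p), (fun _ : ℕ => (1:ℝ)) t = v (Sum.inl ⟨t, h⟩) := fun t h => rfl
  have hz : ∀ (t : ℕ) (h : t < k), z t = v (Sum.inr ⟨t, h⟩) := fun t h => rfl
  rw [lollipop_quad hp hk v (fun _ => 1) z hy hz, dot_self_split v (fun _ => 1) z hy hz]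
  have hzsq : (∑ t ∈ Finset.range k, (z t)^2) = ((k-1 : ℕ) : ℝ) + 1/4 := by
    have h2 : k = (k-1)+1 := by omega
    conv_lhs => rw [h2]
    rw [Finset.sum_range_succ]
    have hlast : z (k-1) = 1/2 := if_pos rfl
    rw [hlast]
    have hothers : ∀ t ∈ Finset.range (k-1), (z t)^2 = 1 := by
      intro t ht
      have := Finset.mem_range.mp ht
      rw [hzdef]
      simp only
      rw [if_neg (by omega)]
      norm_num
    rw [Finset.sum_congr rfl hothers, Finset.sum_const, Finset.card_range]
    norm_num
  have hcyc : (∑ t ∈ Finset.range p, (fun _ : ℕ => (1:ℝ)) t * (fun _ : ℕ => (1:ℝ)) ((t+1)%p)) = (p:ℝ) := by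
    simp
  have hpathsum : (∑ t ∈ Finset.range (k-1), z t * z (t+1)) = if k = 1 then 0 else ((k-2 : ℕ) : ℝ) + 1/2 := by
    rcases Nat.eq_or_lt_of_le hk with h1 | h1
    · rw [if_pos h1.symm, show k-1 = 0 from by omega, Finset.sum_range_zero]
    · rw [if_neg (by omega)]
      have h2 : k-1 = (k-2)+1 := by omega
      rw [h2, Finset.sum_range_succ]
      have ha : z (k-2) = 1 := by rw [hzdef]; simp only; rw [if_neg (by omega)]
      have hb : z ((k-2)+1) = 1/2 := by rw [hzdef]; simp only; rw [if_pos (by omega)]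
      have hothers : ∀ t ∈ Finset.range (k-2), z t * z (t+1) = 1 := by
        intro t ht
        have := Finset.mem_range.mp ht
        rw [hzdef]
        simp only
        rw [if_neg (by omega), if_neg (by omega)]
        norm_num
      rw [Finset.sum_congr rfl hothers, Finset.sum_const, Finset.card_range, ha, hb]
      norm_num
  rw [hzsq, hcyc, hpathsum]
  have hz0 : z 0 = if k = 1 then 1/2 else 1 := by
    show (if (0:ℕ) = k-1 then (1/2:ℝ) else 1) = _
    rcases Nat.eq_or_lt_of_le hk with h1 | h1
    · rw [if_pos (by omega), if_pos h1.symm]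
    · rw [if_neg (by omega), if_neg (by omega)]
  rw [hz0]
  have hone : (∑ t ∈ Finset.range p, ((1:ℝ))^2) = (p:ℝ) := by simp
  rcases Nat.eq_or_lt_of_le hk with h1 | h1
  · rw [if_pos h1.symm, if_pos h1.symm, hone, show k - 1 = 0 from by omega]
    norm_num
    linarith
  · have e2 : ((k-2 : ℕ) : ℝ) = (k:ℝ) - 2 := by
      rw [Nat.cast_sub (by omega)]
      norm_num
    have e1 : ((k-1 : ℕ) : ℝ) = (k:ℝ) - 1 := by
      rw [Nat.cast_sub (by omega)]
      norm_num
    rw [if_neg (by omega), if_neg (by omega), hone, e1, e2]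
    ring_nf
    nlinarith [h1]

end LollipopAux

/-- For `p ≥ 3` and `k ≥ 1`, the largest eigenvalue of the lollipop `L(p,k)` is strictly
greater than `2` and all its other eigenvalues (in particular the second largest one)
are strictly less than `2`. -/
theorem lollipop_second_eigenvalue_lt_two (p k : ℕ) (hp : 3 ≤ p) (hk : 1 ≤ k)
    (hA : (adjMat (lollipop p k)).IsHermitian) :
    ∃ i, 2 < hA.eigenvalues i ∧ ∀ j, j ≠ i → hA.eigenvalues j < 2 := by
  haveI : Nonempty (Fin p ⊕ Fin k) := ⟨Sum.inl ⟨0, by omega⟩⟩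
  obtain ⟨v, hv⟩ := lollipop_testvec hp hk
  exact glue_main (adjMat (lollipop p k)) hA (Sum.inl ⟨0, by omega⟩) v hv
    (fun x hx h0 => lollipop_hyperplane hp hk x hx h0)
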